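/- Let L be a left ideal of the n-th Weyl algebra W, let ≼ be a normal ordering of W, and let B be a Gröbner basis of L with respect to ≼. If ≼' is a normal ordering of W whose restriction to Supp(B) coincides with the restriction of ≼ to Supp(B), then B is a Gröbner basis of L with respect to ≼'. -/

import Mathlib

/-- A total ordering on `S`: an antisymmetric, transitive and total binary relation. -/
def IsTotalOrdering {S : Type*} (r : S → S → Prop) : Prop :=
  (∀ a b, r a b → r b a → a = b) ∧ (∀ a b c, r a b → r b c → r a c) ∧ (∀ a b, r a b ∨ r b a)

/-- `TO S` is the set of all total orderings on `S`. -/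
def TO (S : Type*) : Type _ := {r : S → S → Prop // IsTotalOrdering r}

/-- The underlying relation of a total ordering. -/
def TO.rel {S : Type*} (r : TO S) : S → S → Prop := Subtype.val r

/-- The subbasic open set `𝔘_{(a,b)} = {≼ ∈ TO(S) : a ≼ b}`. -/
def USet {S : Type*} (a b : S) : Set (TO S) := {r | r.rel a b}

/-- The topology `𝒰` on `TO S`: the coarsest topology for which all `𝔘_{(a,b)}` are open. -/
instance TOTop (S : Type*) : TopologicalSpace (TO S) :=
  TopologicalSpace.generateFrom {U | ∃ a b, U = USet a b}


open MvPolynomial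

section Weyl

variable {K : Type*} [Field K] {n : ℕ} {W : Type*} [Ring W] [Algebra K W]

/-- The normal monomial `ξ^λ ∂^μ` of the Weyl algebra, for generators `ξ i` and `∂ i`. -/
def nm (ξ dd : Fin n → W) (lam mu : Fin n → ℕ) : W :=
  (List.ofFn fun i => ξ i ^ lam i).prod * (List.ofFn fun i => dd i ^ mu i).prod

/-- The set `N` of normal monomials `ξ^λ ∂^μ` of the Weyl algebra. -/
def NormalMonomials (ξ dd : Fin n → W) : Set W := {w | ∃ lam mu, w = nm ξ dd lam mu}

/-- The normal monomial `ξ^λ ∂^μ` as an element of `N`. -/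
def nmEl (ξ dd : Fin n → W) (lam mu : Fin n → ℕ) : ↥(NormalMonomials ξ dd) :=
  ⟨nm ξ dd lam mu, lam, mu, rfl⟩

/-- A normal ordering of the Weyl algebra: a total ordering `≼` on `N` such that
`1 = ξ^0∂^0 ≼ ξ^λ∂^μ` for all `λ, μ`, and which is compatible with the addition of
exponents. -/
def IsNormalOrdering (ξ dd : Fin n → W) (r : TO ↥(NormalMonomials ξ dd)) : Prop :=
  (∀ lam mu, r.rel (nmEl ξ dd 0 0) (nmEl ξ dd lam mu)) ∧
  ∀ lam mu rho sig al be : Fin n → ℕ,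
    r.rel (nmEl ξ dd lam mu) (nmEl ξ dd rho sig) →
      r.rel (nmEl ξ dd (lam + al) (mu + be)) (nmEl ξ dd (rho + al) (sig + be))

/-- The set `NO(N)` of all normal orderings. -/
def NOSet (ξ dd : Fin n → W) : Set (TO ↥(NormalMonomials ξ dd)) :=
  {r | IsNormalOrdering ξ dd r}

/-- The exponent vector `(λ, μ)` as a finitely supported function on `Fin n ⊕ Fin n`. -/
noncomputable def expof {n : ℕ} (lam mu : Fin n → ℕ) : (Fin n ⊕ Fin n) →₀ ℕ :=
  Finsupp.equivFunOnFinite.symm (Sum.elim lam mu)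

/-- The normal monomial of `N` corresponding to an exponent vector `d`. -/
noncomputable def nmD (ξ dd : Fin n → W) (d : (Fin n ⊕ Fin n) →₀ ℕ) :
    ↥(NormalMonomials ξ dd) :=
  nmEl ξ dd (fun i => d (Sum.inl i)) (fun i => d (Sum.inr i))

/-- The ordering on exponent vectors induced by a total ordering `r` on `N`. -/
noncomputable def rD (ξ dd : Fin n → W) (r : TO ↥(NormalMonomials ξ dd))
    (d e : (Fin n ⊕ Fin n) →₀ ℕ) : Prop :=
  r.rel (nmD ξ dd d) (nmD ξ dd e)

/-- `IsLTerm ξ dd Φ r w d` says that the exponent vector `d`, i.e. the normal monomial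
`ξ^λ∂^μ` with `(λ,μ) = d`, is the `r`-greatest element of the support of `w`, that is,
`lt_≼(w) = ξ^λ∂^μ` (equivalently `LT_≼(w) = X^λY^μ`). -/
noncomputable def IsLTerm (ξ dd : Fin n → W)
    (Φ : W ≃ₗ[K] MvPolynomial (Fin n ⊕ Fin n) K) (r : TO ↥(NormalMonomials ξ dd))
    (w : W) (d : (Fin n ⊕ Fin n) →₀ ℕ) : Prop :=
  d ∈ (Φ w).support ∧ ∀ c ∈ (Φ w).support, rD ξ dd r c d

/-- The ideal `LT_≼(L) = ⟨LT_≼(x) : x ∈ L, x ≠ 0⟩` of `K[X,Y]`. -/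
noncomputable def LTIdeal (ξ dd : Fin n → W)
    (Φ : W ≃ₗ[K] MvPolynomial (Fin n ⊕ Fin n) K) (r : TO ↥(NormalMonomials ξ dd))
    (L : Set W) : Ideal (MvPolynomial (Fin n ⊕ Fin n) K) :=
  Ideal.span {p | ∃ x ∈ L, x ≠ 0 ∧ ∃ d, IsLTerm ξ dd Φ r x d ∧ p = monomial d 1}

/-- `B` is a Gröbner basis of the left ideal `L` with respect to `r`: `B` is a finite
subset of `L` with `L = Σ_{b∈B} W·b` and `LT_≼(L) = ⟨LT_≼(b) : b ∈ B, b ≠ 0⟩`. -/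
noncomputable def IsGroebnerBasis (ξ dd : Fin n → W)
    (Φ : W ≃ₗ[K] MvPolynomial (Fin n ⊕ Fin n) K) (r : TO ↥(NormalMonomials ξ dd))
    (L : Submodule W W) (B : Finset W) : Prop :=
  (B : Set W) ⊆ (L : Set W) ∧ Submodule.span W (B : Set W) = L ∧
  LTIdeal ξ dd Φ r (L : Set W) =
    Ideal.span {p | ∃ b ∈ B, b ≠ 0 ∧ ∃ d, IsLTerm ξ dd Φ r b d ∧ p = monomial d 1}

end Weyl

/-! ### Auxiliary development -/

section ListProdAux
variable {M : Type*} [Monoid M]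

theorem ofFn_prod_pow_add : ∀ {m : ℕ} (c : Fin m → M), (∀ i j, Commute (c i) (c j)) →
    ∀ g h : Fin m → ℕ, (List.ofFn fun i => c i ^ (g i + h i)).prod =
      (List.ofFn fun i => c i ^ g i).prod * (List.ofFn fun i => c i ^ h i).prod := by
  intro m
  induction m with
  | zero => intro c _ g h; simp
  | succ m ih =>
    intro c hc g h
    have hcomm : ∀ (a : ℕ) (l : Fin m → ℕ),
        Commute (c 0 ^ a) (List.ofFn fun i : Fin m => c i.succ ^ l i).prod := by
      intro a l
      refine Commute.list_prod_right _ _ ?_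
      intro x hx
      rw [List.mem_ofFn] at hx
      obtain ⟨i, rfl⟩ := hx
      exact (hc 0 i.succ).pow_pow _ _
    simp only [List.ofFn_succ, List.prod_cons]
    rw [ih (fun i => c i.succ) (fun i j => hc i.succ j.succ) (fun i => g i.succ) (fun i => h i.succ),
      pow_add]
    calc c 0 ^ g 0 * c 0 ^ h 0 *
          ((List.ofFn fun i : Fin m => c i.succ ^ g i.succ).prod *
           (List.ofFn fun i : Fin m => c i.succ ^ h i.succ).prod)
        = c 0 ^ g 0 * (c 0 ^ h 0 * (List.ofFn fun i : Fin m => c i.succ ^ g i.succ).prod) *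
            (List.ofFn fun i : Fin m => c i.succ ^ h i.succ).prod := by
          rw [mul_assoc, mul_assoc, mul_assoc]
      _ = c 0 ^ g 0 * ((List.ofFn fun i : Fin m => c i.succ ^ g i.succ).prod * c 0 ^ h 0) *
            (List.ofFn fun i : Fin m => c i.succ ^ h i.succ).prod := by
            rw [(hcomm (h 0) (fun i => g i.succ)).eq]
      _ = _ := by rw [mul_assoc, mul_assoc, mul_assoc]

theorem ofFn_prod_one {m : ℕ} : (List.ofFn fun _ : Fin m => (1 : M)).prod = 1 := by
  rw [List.prod_eq_one]; intro x hx; rw [List.mem_ofFn] at hx; obtain ⟨i, rfl⟩ := hx; rfl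

theorem ofFn_prod_pow_single : ∀ {m : ℕ} (c : Fin m → M) (j : Fin m),
    (List.ofFn fun i => c i ^ (if i = j then 1 else 0 : ℕ)).prod = c j := by
  intro m
  induction m with
  | zero => exact fun c j => j.elim0
  | succ m ih =>
    intro c j
    simp only [List.ofFn_succ, List.prod_cons]
    induction j using Fin.cases with
    | zero =>
      simp only [if_pos rfl, pow_one]
      have : ∀ i : Fin m, (if i.succ = (0 : Fin (m+1)) then 1 else 0 : ℕ) = 0 := by
        intro i; simp [Fin.succ_ne_zero]
      simp only [this, pow_zero, ofFn_prod_one, mul_one]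
      simp
    | succ j' =>
      have h0 : (if (0 : Fin (m+1)) = j'.succ then 1 else 0 : ℕ) = 0 := by
        simp [(Fin.succ_ne_zero j').symm]
      have hs : ∀ i : Fin m, (if i.succ = j'.succ then 1 else 0 : ℕ) = if i = j' then 1 else 0 := by
        intro i; simp [Fin.succ_inj]
      rw [h0, pow_zero, one_mul]
      simp only [hs]
      exact ih (fun i => c i.succ) j'
end ListProdAux

section WeylAux0
variable {n : ℕ} {W : Type*} [Ring W]

/-- product of powers of a family -/
def Xp (c : Fin n → W) (g : Fin n → ℕ) : W := (List.ofFn fun i => c i ^ g i).prod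

/-- indicator exponent -/
def sgl (j : Fin n) : Fin n → ℕ := fun i => if i = j then 1 else 0

/-- decrement exponent at `i` -/
def gdec (g : Fin n → ℕ) (i : Fin n) : Fin n → ℕ := fun j => if j = i then g i - 1 else g j

theorem nm_eq_Xp (ξ dd : Fin n → W) (lam mu : Fin n → ℕ) :
    nm ξ dd lam mu = Xp ξ lam * Xp dd mu := rfl

theorem Xp_add {c : Fin n → W} (hc : ∀ i j, c i * c j = c j * c i) (g h : Fin n → ℕ) :
    Xp c (g + h) = Xp c g * Xp c h :=
  ofFn_prod_pow_add c (fun i j => hc i j) g h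

theorem Xp_zero (c : Fin n → W) : Xp c 0 = 1 := by
  unfold Xp
  refine List.prod_eq_one fun x hx => ?_
  rw [List.mem_ofFn] at hx
  obtain ⟨i, rfl⟩ := hx
  exact pow_zero _

theorem Xp_sgl (c : Fin n → W) (j : Fin n) : Xp c (sgl j) = c j :=
  ofFn_prod_pow_single c j

theorem gdec_add_sgl {g : Fin n → ℕ} {i : Fin n} (h : g i ≠ 0) : gdec g i + sgl i = g := by
  funext j; simp only [gdec, sgl, Pi.add_apply]
  by_cases hj : j = i
  · subst hj; simp; omega
  · simp [hj]

theorem gdec_le {g : Fin n → ℕ} {i : Fin n} : gdec g i ≤ g := by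
  intro k
  by_cases hk : k = i
  · subst hk
    have hgd2 : gdec g k k = g k - 1 := by simp [gdec]
    rw [hgd2]; exact Nat.sub_le _ _
  · simp only [gdec, if_neg hk]; exact le_refl _

variable {ξ dd : Fin n → W}

theorem dd_mul_Xp (hξ : ∀ i j, ξ i * ξ j = ξ j * ξ i)
    (hrel : ∀ i j, dd i * ξ j - ξ j * dd i = if i = j then (1 : W) else 0) :
    ∀ (s : ℕ) (g : Fin n → ℕ), (∑ j, g j) = s → ∀ i,
      dd i * Xp ξ g = Xp ξ g * dd i + (g i) • Xp ξ (gdec g i) := by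
  have hbase : ∀ i j, dd i * ξ j = ξ j * dd i + if i = j then (1:W) else 0 := by
    intro i j
    have h := eq_add_of_sub_eq (hrel i j)
    rw [h, add_comm]
  intro s
  induction s with
  | zero =>
    intro g hg i
    have hg0 : g = 0 := by
      funext j
      have := Finset.sum_eq_zero_iff.mp hg j (Finset.mem_univ j)
      simpa using this
    subst hg0
    simp [Xp_zero]
  | succ s ih =>
    intro g hg i
    have hex : ∃ j, g j ≠ 0 := by
      by_contra hno
      push_neg at hno
      have : (∑ j, g j) = 0 := Finset.sum_eq_zero fun j _ => hno j
      omega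
    obtain ⟨j, hj⟩ := hex
    set g' := gdec g j with hg'def
    have hgg : g' + sgl j = g := gdec_add_sgl hj
    have hsum' : (∑ k, g' k) = s := by
      have h1 : (∑ k, (g' + sgl j) k) = s + 1 := by rw [hgg]; exact hg
      have h2 : (∑ k, (g' + sgl j) k) = (∑ k, g' k) + (∑ k, sgl j k) := by
        simp [Finset.sum_add_distrib]
      have h3 : (∑ k, sgl j k) = 1 := by simp [sgl]
      omega
    have hXg : Xp ξ g = Xp ξ g' * ξ j := by rw [← hgg, Xp_add hξ, Xp_sgl]
    have IH := ih g' hsum' i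
    rw [hXg, ← mul_assoc, IH]
    rw [add_mul, mul_assoc, hbase i j, mul_add, smul_mul_assoc]
    have hXc : Xp ξ (gdec g' i) * ξ j = Xp ξ (gdec g' i + sgl j) := by
      rw [Xp_add hξ, Xp_sgl]
    rw [hXc]
    by_cases hij : i = j
    · subst hij
      rw [if_pos rfl, mul_one]
      have hgi : g i = g' i + 1 := by
        have := congrFun hgg i; simp [sgl] at this; omega
      by_cases hgi' : g' i = 0
      · have hz : (g' i) • Xp ξ (gdec g' i + sgl i) = 0 := by rw [hgi', zero_smul]
        have hgd : gdec g i = g' := rfl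
        rw [hz, hgd, hgi, hgi', mul_assoc]
        simp
      · have h1 : gdec g' i + sgl i = g' := gdec_add_sgl hgi'
        have hgd : gdec g i = g' := rfl
        rw [h1, hgd, hgi, succ_nsmul]
        simp only [mul_assoc]
        abel
    · rw [if_neg hij, mul_zero]
      have h1 : gdec g' i + sgl j = gdec g i := by
        funext k
        simp only [gdec, sgl, Pi.add_apply, hg'def]
        have hji : ¬ j = i := fun h => hij h.symm
        by_cases hk : k = i
        · subst hk; simp [hij, hji]
        · by_cases hkj : k = j
          · subst hkj; simp [hk, hji]; omega
          · simp [hk, hkj]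
      have h2 : g i = g' i := by
        have h3 := congrFun hgg i
        simp only [sgl, Pi.add_apply, if_neg hij] at h3
        omega
      rw [h1, h2, ← mul_assoc]
      simp only [add_zero]
end WeylAux0

section WeylAux1
variable {K : Type*} [Field K] {n : ℕ} {W : Type*} [Ring W] [Algebra K W]
variable (ξ dd : Fin n → W)

/-- lower-order terms set -/
def lowSet (a b : Fin n → ℕ) : Set W :=
  {w | ∃ p q, p ≤ a ∧ q ≤ b ∧ ¬(p = a ∧ q = b) ∧ w = nm ξ dd p q}

variable {ξ dd}

theorem mem_span_of_image {S T : Set W} (F : W →ₗ[K] W)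
    (h : ∀ x ∈ S, F x ∈ Submodule.span K T) {z : W} (hz : z ∈ Submodule.span K S) :
    F z ∈ Submodule.span K T := by
  induction hz using Submodule.span_induction with
  | mem x hx => exact h x hx
  | zero => rw [map_zero]; exact Submodule.zero_mem _
  | add x y _ _ hx hy => rw [map_add]; exact Submodule.add_mem _ hx hy
  | smul a x _ hx => rw [map_smul]; exact Submodule.smul_mem _ _ hx

theorem Df_mul_Xg (hξ : ∀ i j, ξ i * ξ j = ξ j * ξ i)
    (hd : ∀ i j, dd i * dd j = dd j * dd i)
    (hrel : ∀ i j, dd i * ξ j - ξ j * dd i = if i = j then (1 : W) else 0) :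
    ∀ (s : ℕ) (f : Fin n → ℕ), (∑ j, f j) = s → ∀ g, ∃ z,
      Xp dd f * Xp ξ g = nm ξ dd g f + z ∧ z ∈ Submodule.span K (lowSet ξ dd g f) := by
  intro s
  induction s with
  | zero =>
    intro f hf g
    have hf0 : f = 0 := by
      funext j; simpa using Finset.sum_eq_zero_iff.mp hf j (Finset.mem_univ j)
    subst hf0
    exact ⟨0, by rw [Xp_zero, one_mul, nm_eq_Xp, Xp_zero, mul_one, add_zero],
      Submodule.zero_mem _⟩
  | succ s ih =>
    intro f hf g
    have hex : ∃ i, f i ≠ 0 := by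
      by_contra hno; push_neg at hno
      have : (∑ j, f j) = 0 := Finset.sum_eq_zero fun j _ => hno j
      omega
    obtain ⟨i, hi⟩ := hex
    set f' := gdec f i with hf'def
    have hff : f' + sgl i = f := gdec_add_sgl hi
    have hsum' : (∑ k, f' k) = s := by
      have h1 : (∑ k, (f' + sgl i) k) = s + 1 := by rw [hff]; exact hf
      have h2 : (∑ k, (f' + sgl i) k) = (∑ k, f' k) + (∑ k, sgl i k) := by
        simp [Finset.sum_add_distrib]
      have h3 : (∑ k, sgl i k) = 1 := by simp [sgl]
      omega
    have hXf : Xp dd f = Xp dd f' * dd i := by rw [← hff, Xp_add hd, Xp_sgl]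
    obtain ⟨z₁, hz₁, hz₁m⟩ := ih f' hsum' g
    obtain ⟨z₂, hz₂, hz₂m⟩ := ih f' hsum' (gdec g i)
    have hD2 := dd_mul_Xp hξ hrel (∑ j, g j) g rfl i
    have key : Xp dd f * Xp ξ g =
        nm ξ dd g f + (z₁ * dd i + ((g i) • nm ξ dd (gdec g i) f' + (g i) • z₂)) := by
      rw [hXf, mul_assoc, hD2, mul_add, ← mul_assoc, hz₁, mul_smul_comm, hz₂, smul_add]
      rw [add_mul]
      have hnm : nm ξ dd g f' * dd i = nm ξ dd g f := by
        rw [nm_eq_Xp, nm_eq_Xp, mul_assoc, ← Xp_sgl dd i, ← Xp_add hd, hff]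
      rw [hnm]
      abel
    refine ⟨_, key, ?_⟩
    have hle_f : f' ≤ f := by
      intro k
      conv_rhs => rw [← hff]
      simp only [Pi.add_apply]
      exact Nat.le_add_right _ _
    have hne_f : f' ≠ f := by
      intro hcontra
      have := congrFun hcontra i
      have h4 := congrFun hff i
      simp [sgl] at h4
      omega
    refine Submodule.add_mem _ ?_ (Submodule.add_mem _ ?_ ?_)
    · have := mem_span_of_image (S := lowSet ξ dd g f') (T := lowSet ξ dd g f)
        (LinearMap.mulRight K (dd i)) ?_ hz₁m
      · simpa using this
      · rintro x ⟨p, q, hp, hq, hne, rfl⟩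
        refine Submodule.subset_span ⟨p, q + sgl i, hp, ?_, ?_, ?_⟩
        · intro k; rw [← hff]; simp only [Pi.add_apply]; exact Nat.add_le_add_right (hq k) _
        · rintro ⟨h1, h2⟩
          refine hne ⟨h1, ?_⟩
          funext k
          have := congrFun h2 k
          have h5 := congrFun hff k
          simp only [Pi.add_apply] at this h5
          omega
        · simp only [LinearMap.mulRight_apply, nm_eq_Xp, mul_assoc, ← Xp_sgl dd i, ← Xp_add hd]
    · refine nsmul_mem (Submodule.subset_span ?_) _
      exact ⟨gdec g i, f', gdec_le, hle_f, fun h => hne_f h.2, rfl⟩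
    · refine nsmul_mem (Submodule.span_le.mpr ?_ hz₂m) _
      rintro x ⟨p, q, hp, hq, _, rfl⟩
      refine Submodule.subset_span ⟨p, q, le_trans hp gdec_le, le_trans hq hle_f, ?_, rfl⟩
      rintro ⟨_, h2⟩
      exact hne_f (le_antisymm hle_f (h2 ▸ hq))

/-- full product lemma -/
theorem nm_mul_nm (hξ : ∀ i j, ξ i * ξ j = ξ j * ξ i)
    (hd : ∀ i j, dd i * dd j = dd j * dd i)
    (hrel : ∀ i j, dd i * ξ j - ξ j * dd i = if i = j then (1 : W) else 0)
    (f1 f2 g1 g2 : Fin n → ℕ) : ∃ z,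
      nm ξ dd f1 f2 * nm ξ dd g1 g2 = nm ξ dd (f1 + g1) (f2 + g2) + z ∧
      z ∈ Submodule.span K (lowSet ξ dd (f1 + g1) (f2 + g2)) := by
  obtain ⟨z₀, hz₀, hz₀m⟩ := Df_mul_Xg (K := K) hξ hd hrel (∑ j, f2 j) f2 rfl g1
  refine ⟨Xp ξ f1 * z₀ * Xp dd g2, ?_, ?_⟩
  · rw [nm_eq_Xp, nm_eq_Xp, mul_assoc, ← mul_assoc (Xp dd f2), hz₀]
    rw [nm_eq_Xp]
    calc Xp ξ f1 * ((Xp ξ g1 * Xp dd f2 + z₀) * Xp dd g2)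
        = Xp ξ f1 * (Xp ξ g1 * Xp dd f2) * Xp dd g2 + Xp ξ f1 * z₀ * Xp dd g2 := by
          rw [add_mul, mul_add]
          simp only [mul_assoc]
      _ = nm ξ dd (f1 + g1) (f2 + g2) + Xp ξ f1 * z₀ * Xp dd g2 := by
          rw [nm_eq_Xp, Xp_add hξ, Xp_add hd]
          simp only [mul_assoc]
  · have := mem_span_of_image (S := lowSet ξ dd g1 f2)
      (T := lowSet ξ dd (f1 + g1) (f2 + g2))
      ((LinearMap.mulRight K (Xp dd g2)).comp (LinearMap.mulLeft K (Xp ξ f1))) ?_ hz₀m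
    · simpa [mul_assoc] using this
    · rintro x ⟨p, q, hp, hq, hne, rfl⟩
      refine Submodule.subset_span ⟨f1 + p, q + g2, ?_, ?_, ?_, ?_⟩
      · intro k; simp only [Pi.add_apply]; exact Nat.add_le_add_left (hp k) _
      · intro k; simp only [Pi.add_apply]; exact Nat.add_le_add_right (hq k) _
      · rintro ⟨h1, h2⟩
        refine hne ⟨?_, ?_⟩
        · funext k
          have := congrFun h1 k; simp only [Pi.add_apply] at this; omega
        · funext k
          have := congrFun h2 k; simp only [Pi.add_apply] at this; omega
      · simp only [LinearMap.comp_apply, LinearMap.mulLeft_apply, LinearMap.mulRight_apply,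
          nm_eq_Xp, Xp_add hξ, Xp_add hd]
        simp only [mul_assoc]
end WeylAux1
section WeylAux2
variable {K : Type*} [Field K] {n : ℕ} {W : Type*} [Ring W] [Algebra K W]
variable {ξ dd : Fin n → W}

theorem expof_apply_inl (p q : Fin n → ℕ) (i : Fin n) : expof p q (Sum.inl i) = p i := by
  simp [expof]

theorem expof_apply_inr (p q : Fin n → ℕ) (i : Fin n) : expof p q (Sum.inr i) = q i := by
  simp [expof]

theorem expof_split (d : (Fin n ⊕ Fin n) →₀ ℕ) :
    expof (fun i => d (Sum.inl i)) (fun i => d (Sum.inr i)) = d := by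
  ext a
  cases a with
  | inl i => rw [expof_apply_inl]
  | inr i => rw [expof_apply_inr]

theorem expof_le_expof {p q a b : Fin n → ℕ} (h1 : p ≤ a) (h2 : q ≤ b) :
    expof p q ≤ expof a b := by
  rw [Finsupp.le_def]
  intro s
  cases s with
  | inl i => rw [expof_apply_inl, expof_apply_inl]; exact h1 i
  | inr i => rw [expof_apply_inr, expof_apply_inr]; exact h2 i

theorem expof_inj {p q p' q' : Fin n → ℕ} (h : expof p q = expof p' q') : p = p' ∧ q = q' := by
  constructor
  · funext i
    have := congrArg (fun x => Finsupp.toFun x (Sum.inl i)) h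
    have h' : (expof p q) (Sum.inl i) = (expof p' q') (Sum.inl i) := this
    simpa [expof_apply_inl] using h'
  · funext i
    have := congrArg (fun x => Finsupp.toFun x (Sum.inr i)) h
    have h' : (expof p q) (Sum.inr i) = (expof p' q') (Sum.inr i) := this
    simpa [expof_apply_inr] using h'

theorem expof_add (p q a b : Fin n → ℕ) :
    expof (p + a) (q + b) = expof p q + expof a b := by
  ext s
  cases s with
  | inl i => simp [expof_apply_inl, Finsupp.add_apply]
  | inr i => simp [expof_apply_inr, Finsupp.add_apply]

/-- normal monomial of a `Finsupp` exponent vector -/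
def NMf (ξ dd : Fin n → W) (d : (Fin n ⊕ Fin n) →₀ ℕ) : W :=
  nm ξ dd (fun i => d (Sum.inl i)) (fun i => d (Sum.inr i))

theorem Phi_NMf (Φ : W ≃ₗ[K] MvPolynomial (Fin n ⊕ Fin n) K)
    (hΦ : ∀ lam mu, Φ (nm ξ dd lam mu) = MvPolynomial.monomial (expof lam mu) 1)
    (d : (Fin n ⊕ Fin n) →₀ ℕ) : Φ (NMf ξ dd d) = monomial d 1 := by
  rw [NMf, hΦ, expof_split]

theorem NMf_val (d : (Fin n ⊕ Fin n) →₀ ℕ) : (nmD ξ dd d).1 = NMf ξ dd d := rfl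

theorem span_low_support (Φ : W ≃ₗ[K] MvPolynomial (Fin n ⊕ Fin n) K)
    (hΦ : ∀ lam mu, Φ (nm ξ dd lam mu) = MvPolynomial.monomial (expof lam mu) 1)
    {a b : Fin n → ℕ} {z : W} (hz : z ∈ Submodule.span K (lowSet ξ dd a b)) :
    ∀ x ∈ (Φ z).support, x ≤ expof a b ∧ x ≠ expof a b := by
  classical
  induction hz using Submodule.span_induction with
  | mem w hw =>
    obtain ⟨p, q, hp, hq, hne, rfl⟩ := hw
    intro x hx
    rw [hΦ, support_monomial] at hx
    simp only [one_ne_zero, if_false, Finset.mem_singleton] at hx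
    subst hx
    refine ⟨expof_le_expof hp hq, fun hcontra => hne ?_⟩
    exact expof_inj hcontra
  | zero => intro x hx; rw [map_zero] at hx; simp at hx
  | add w₁ w₂ _ _ h1 h2 =>
    intro x hx
    rw [map_add] at hx
    rcases Finset.mem_union.mp (Finsupp.support_add hx) with h | h
    · exact h1 x h
    · exact h2 x h
  | smul c w _ h1 =>
    intro x hx
    rw [map_smul] at hx
    exact h1 x (Finsupp.support_smul hx)

theorem NMf_mul_NMf (hξ : ∀ i j, ξ i * ξ j = ξ j * ξ i)
    (hd : ∀ i j, dd i * dd j = dd j * dd i)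
    (hrel : ∀ i j, dd i * ξ j - ξ j * dd i = if i = j then (1 : W) else 0)
    (Φ : W ≃ₗ[K] MvPolynomial (Fin n ⊕ Fin n) K)
    (hΦ : ∀ lam mu, Φ (nm ξ dd lam mu) = MvPolynomial.monomial (expof lam mu) 1)
    (d e : (Fin n ⊕ Fin n) →₀ ℕ) :
    coeff (d + e) (Φ (NMf ξ dd d * NMf ξ dd e)) = 1 ∧
      ∀ x ∈ (Φ (NMf ξ dd d * NMf ξ dd e)).support, x ≤ d + e := by
  classical
  obtain ⟨z, hz, hzm⟩ := nm_mul_nm (K := K) hξ hd hrel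
    (fun i => d (Sum.inl i)) (fun i => d (Sum.inr i))
    (fun i => e (Sum.inl i)) (fun i => e (Sum.inr i))
  have htop : expof ((fun i => d (Sum.inl i)) + fun i => e (Sum.inl i))
      ((fun i => d (Sum.inr i)) + fun i => e (Sum.inr i)) = d + e := by
    rw [expof_add, expof_split, expof_split]
  have hΦeq : Φ (NMf ξ dd d * NMf ξ dd e) = monomial (d + e) 1 + Φ z := by
    rw [NMf, NMf, hz, map_add, hΦ, htop]
  have hzs := span_low_support Φ hΦ hzm
  rw [htop] at hzs
  constructor
  · rw [hΦeq, coeff_add, coeff_monomial, if_pos rfl]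
    have : coeff (d + e) (Φ z) = 0 := by
      rw [← notMem_support_iff]
      intro hmem
      exact (hzs _ hmem).2 rfl
    rw [this, add_zero]
  · intro x hx
    rw [hΦeq] at hx
    rcases Finset.mem_union.mp (Finsupp.support_add hx) with h | h
    · have h2 := support_monomial_subset h
      rw [Finset.mem_singleton] at h2
      subst h2; exact le_refl _
    · exact (hzs _ h).1

/-! ### order lemmas -/

theorem rD_total (r : TO ↥(NormalMonomials ξ dd)) (d e : (Fin n ⊕ Fin n) →₀ ℕ) :
    rD ξ dd r d e ∨ rD ξ dd r e d := r.2.2.2 _ _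

theorem rD_trans (r : TO ↥(NormalMonomials ξ dd)) {d e f : (Fin n ⊕ Fin n) →₀ ℕ}
    (h1 : rD ξ dd r d e) (h2 : rD ξ dd r e f) : rD ξ dd r d f := r.2.2.1 _ _ _ h1 h2

theorem rD_refl (r : TO ↥(NormalMonomials ξ dd)) (d : (Fin n ⊕ Fin n) →₀ ℕ) :
    rD ξ dd r d d := (rD_total r d d).elim id id

theorem rD_antisymm (Φ : W ≃ₗ[K] MvPolynomial (Fin n ⊕ Fin n) K)
    (hΦ : ∀ lam mu, Φ (nm ξ dd lam mu) = MvPolynomial.monomial (expof lam mu) 1)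
    (r : TO ↥(NormalMonomials ξ dd)) {d e : (Fin n ⊕ Fin n) →₀ ℕ}
    (h1 : rD ξ dd r d e) (h2 : rD ξ dd r e d) : d = e := by
  have h3 : nmD ξ dd d = nmD ξ dd e := r.2.1 _ _ h1 h2
  have h4 : NMf ξ dd d = NMf ξ dd e := congrArg Subtype.val h3
  have h5 : (monomial d (1:K) : MvPolynomial (Fin n ⊕ Fin n) K) = monomial e 1 := by
    rw [← Phi_NMf Φ hΦ, ← Phi_NMf Φ hΦ, h4]
  exact monomial_left_injective one_ne_zero h5

theorem rD_mono {r : TO ↥(NormalMonomials ξ dd)} (hr : IsNormalOrdering ξ dd r)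
    {d e : (Fin n ⊕ Fin n) →₀ ℕ} (h : d ≤ e) : rD ξ dd r d e := by
  rw [Finsupp.le_def] at h
  set k1 : Fin n → ℕ := fun i => e (Sum.inl i) - d (Sum.inl i) with hk1
  set k2 : Fin n → ℕ := fun i => e (Sum.inr i) - d (Sum.inr i) with hk2
  have h1 := hr.1 k1 k2
  have h2 := hr.2 0 0 k1 k2 (fun i => d (Sum.inl i)) (fun i => d (Sum.inr i)) h1
  have e1 : (0 : Fin n → ℕ) + (fun i => d (Sum.inl i)) = fun i => d (Sum.inl i) := zero_add _
  have e2 : (0 : Fin n → ℕ) + (fun i => d (Sum.inr i)) = fun i => d (Sum.inr i) := zero_add _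
  have e3 : k1 + (fun i => d (Sum.inl i)) = fun i => e (Sum.inl i) := by
    funext i; simp only [Pi.add_apply, hk1]; exact Nat.sub_add_cancel (h _)
  have e4 : k2 + (fun i => d (Sum.inr i)) = fun i => e (Sum.inr i) := by
    funext i; simp only [Pi.add_apply, hk2]; exact Nat.sub_add_cancel (h _)
  rw [e1, e2, e3, e4] at h2
  exact h2

theorem rD_add_right {r : TO ↥(NormalMonomials ξ dd)} (hr : IsNormalOrdering ξ dd r)
    {d e : (Fin n ⊕ Fin n) →₀ ℕ} (c : (Fin n ⊕ Fin n) →₀ ℕ) (h : rD ξ dd r d e) :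
    rD ξ dd r (d + c) (e + c) := by
  have h2 := hr.2 (fun i => d (Sum.inl i)) (fun i => d (Sum.inr i))
    (fun i => e (Sum.inl i)) (fun i => e (Sum.inr i))
    (fun i => c (Sum.inl i)) (fun i => c (Sum.inr i)) h
  have e1 : (fun i => d (Sum.inl i)) + (fun i => c (Sum.inl i))
      = fun i => (d + c) (Sum.inl i) := by
    funext i; simp [Finsupp.add_apply]
  have e2 : (fun i => d (Sum.inr i)) + (fun i => c (Sum.inr i))
      = fun i => (d + c) (Sum.inr i) := by
    funext i; simp [Finsupp.add_apply]
  have e3 : (fun i => e (Sum.inl i)) + (fun i => c (Sum.inl i))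
      = fun i => (e + c) (Sum.inl i) := by
    funext i; simp [Finsupp.add_apply]
  have e4 : (fun i => e (Sum.inr i)) + (fun i => c (Sum.inr i))
      = fun i => (e + c) (Sum.inr i) := by
    funext i; simp [Finsupp.add_apply]
  rw [e1, e2, e3, e4] at h2
  exact h2

theorem rD_strict_wf (Φ : W ≃ₗ[K] MvPolynomial (Fin n ⊕ Fin n) K)
    (hΦ : ∀ lam mu, Φ (nm ξ dd lam mu) = MvPolynomial.monomial (expof lam mu) 1)
    {r : TO ↥(NormalMonomials ξ dd)} (hr : IsNormalOrdering ξ dd r) :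
    WellFounded (fun d e : (Fin n ⊕ Fin n) →₀ ℕ => rD ξ dd r d e ∧ d ≠ e) := by
  haveI h1 : IsIrrefl ((Fin n ⊕ Fin n) →₀ ℕ)
      (fun d e : (Fin n ⊕ Fin n) →₀ ℕ => rD ξ dd r d e ∧ d ≠ e) := ⟨fun _ h => h.2 rfl⟩
  haveI h2 : IsTrans ((Fin n ⊕ Fin n) →₀ ℕ)
      (fun d e : (Fin n ⊕ Fin n) →₀ ℕ => rD ξ dd r d e ∧ d ≠ e) := by
    refine ⟨fun a b c hab hbc => ⟨rD_trans r hab.1 hbc.1, fun hac => ?_⟩⟩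
    subst hac
    exact hbc.2 (rD_antisymm Φ hΦ r hbc.1 hab.1)
  haveI : IsStrictOrder ((Fin n ⊕ Fin n) →₀ ℕ)
      (fun d e : (Fin n ⊕ Fin n) →₀ ℕ => rD ξ dd r d e ∧ d ≠ e) := ⟨⟩
  rw [RelEmbedding.wellFounded_iff_isEmpty]
  refine ⟨fun f => ?_⟩
  obtain ⟨m, m', hmm, hle⟩ := Set.PartiallyWellOrderedOn.exists_lt
    (Set.isPWO_of_wellQuasiOrderedLE (Set.univ : Set ((Fin n ⊕ Fin n) →₀ ℕ)))
    (f := f) (fun _ => Set.mem_univ _)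
  have hgt : rD ξ dd r (f m') (f m) ∧ f m' ≠ f m := f.map_rel_iff.mpr hmm
  have hle' : rD ξ dd r (f m) (f m') := rD_mono hr hle
  exact hgt.2 (rD_antisymm Φ hΦ r hgt.1 hle')

theorem exists_rD_greatest (r : TO ↥(NormalMonomials ξ dd))
    (s : Finset ((Fin n ⊕ Fin n) →₀ ℕ)) (hs : s.Nonempty) :
    ∃ d ∈ s, ∀ c ∈ s, rD ξ dd r c d := by
  induction s using Finset.induction_on with
  | empty => exact absurd hs (by simp)
  | @insert a t ha ih =>
    rcases t.eq_empty_or_nonempty with rfl | ht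
    · refine ⟨a, Finset.mem_insert_self _ _, fun c hc => ?_⟩
      rw [Finset.mem_insert] at hc
      rcases hc with rfl | hc
      · exact rD_refl r c
      · simp at hc
    · obtain ⟨d, hd, hmax⟩ := ih ht
      rcases rD_total (ξ := ξ) (dd := dd) r a d with h | h
      · refine ⟨d, Finset.mem_insert_of_mem hd, fun c hc => ?_⟩
        rw [Finset.mem_insert] at hc
        rcases hc with rfl | hc
        · exact h
        · exact hmax c hc
      · refine ⟨a, Finset.mem_insert_self _ _, fun c hc => ?_⟩
        rw [Finset.mem_insert] at hc
        rcases hc with rfl | hc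
        · exact rD_refl r c
        · exact rD_trans r (hmax c hc) h

/-! ### monomial ideal lemmas -/

theorem monomial_mem_span_iff_div {Es : Set ((Fin n ⊕ Fin n) →₀ ℕ)}
    {d : (Fin n ⊕ Fin n) →₀ ℕ}
    (h : (monomial d (1:K) : MvPolynomial (Fin n ⊕ Fin n) K) ∈
      Ideal.span {p | ∃ e ∈ Es, p = (monomial e (1:K) : MvPolynomial (Fin n ⊕ Fin n) K)}) :
    ∃ e ∈ Es, e ≤ d := by
  by_contra hno
  push_neg at hno
  obtain ⟨c, hc, hsum⟩ := Submodule.mem_span_set.mp h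
  have h1 : coeff d (c.sum fun mi r => r • mi) = 1 := by
    rw [hsum, coeff_monomial, if_pos rfl]
  rw [Finsupp.sum, coeff_sum] at h1
  have h2 : ∀ a ∈ c.support, coeff d (c a • a) = 0 := by
    intro a hac
    obtain ⟨e, he, rfl⟩ := hc hac
    rw [smul_eq_mul, coeff_mul_monomial', if_neg (fun hle => (hno e he) hle)]
  rw [Finset.sum_eq_zero h2] at h1
  exact one_ne_zero h1.symm

theorem monomial_mem_span_of_div {Es : Set ((Fin n ⊕ Fin n) →₀ ℕ)}
    {d e : (Fin n ⊕ Fin n) →₀ ℕ} (he : e ∈ Es) (hle : e ≤ d) :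
    (monomial d (1:K) : MvPolynomial (Fin n ⊕ Fin n) K) ∈
      Ideal.span {p | ∃ e ∈ Es, p = (monomial e (1:K) : MvPolynomial (Fin n ⊕ Fin n) K)} := by
  have : (monomial d (1:K) : MvPolynomial (Fin n ⊕ Fin n) K)
      = monomial (d - e) 1 * monomial e 1 := by
    rw [monomial_mul, one_mul, tsub_add_cancel_of_le hle]
  rw [this]
  exact Ideal.mul_mem_left _ _ (Ideal.subset_span ⟨e, he, rfl⟩)

end WeylAux2
section WeylAux3
variable {K : Type*} [Field K] {n : ℕ} {W : Type*} [Ring W] [Algebra K W]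
variable {ξ dd : Fin n → W}

theorem NMf_mul_lt (hξ : ∀ i j, ξ i * ξ j = ξ j * ξ i)
    (hd : ∀ i j, dd i * dd j = dd j * dd i)
    (hrel : ∀ i j, dd i * ξ j - ξ j * dd i = if i = j then (1 : W) else 0)
    (Φ : W ≃ₗ[K] MvPolynomial (Fin n ⊕ Fin n) K)
    (hΦ : ∀ lam mu, Φ (nm ξ dd lam mu) = MvPolynomial.monomial (expof lam mu) 1)
    {r r' : TO ↥(NormalMonomials ξ dd)}
    (hr : IsNormalOrdering ξ dd r) (hr' : IsNormalOrdering ξ dd r')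
    {b : W} {eb : (Fin n ⊕ Fin n) →₀ ℕ}
    (hb : IsLTerm ξ dd Φ r b eb) (hb' : IsLTerm ξ dd Φ r' b eb)
    (f : (Fin n ⊕ Fin n) →₀ ℕ) :
    coeff (f + eb) (Φ (NMf ξ dd f * b)) = coeff eb (Φ b) ∧
      ∀ x ∈ (Φ (NMf ξ dd f * b)).support,
        rD ξ dd r x (f + eb) ∧ rD ξ dd r' x (f + eb) := by
  classical
  have hbsum : b = ∑ g ∈ (Φ b).support, (coeff g (Φ b)) • NMf ξ dd g := by
    apply Φ.injective
    rw [map_sum]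
    simp_rw [map_smul, Phi_NMf Φ hΦ]
    conv_lhs => rw [as_sum (Φ b)]
    refine Finset.sum_congr rfl fun g _ => ?_
    rw [smul_monomial, smul_eq_mul, mul_one]
  have hmul : NMf ξ dd f * b
      = ∑ g ∈ (Φ b).support, coeff g (Φ b) • (NMf ξ dd f * NMf ξ dd g) := by
    conv_lhs => rw [hbsum]
    rw [Finset.mul_sum]
    exact Finset.sum_congr rfl fun g _ => (mul_smul_comm _ _ _)
  have hΦmul : Φ (NMf ξ dd f * b)
      = ∑ g ∈ (Φ b).support, coeff g (Φ b) • Φ (NMf ξ dd f * NMf ξ dd g) := by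
    rw [hmul, map_sum]
    simp_rw [map_smul]
  have hle_cancel : ∀ g : (Fin n ⊕ Fin n) →₀ ℕ, f + eb ≤ f + g → eb ≤ g := by
    intro g hle
    rw [Finsupp.le_def] at hle ⊢
    intro s
    have := hle s
    simp only [Finsupp.add_apply] at this
    omega
  constructor
  · rw [hΦmul, coeff_sum]
    rw [Finset.sum_eq_single eb]
    · rw [coeff_smul, (NMf_mul_NMf hξ hd hrel Φ hΦ f eb).1, smul_eq_mul, mul_one]
    · intro g hg hgne
      rw [coeff_smul]
      have hz : coeff (f + eb) (Φ (NMf ξ dd f * NMf ξ dd g)) = 0 := by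
        rw [← notMem_support_iff]
        intro hmem
        have hle := (NMf_mul_NMf hξ hd hrel Φ hΦ f g).2 _ hmem
        have h1 : rD ξ dd r eb g := rD_mono hr (hle_cancel g hle)
        have h2 : rD ξ dd r g eb := hb.2 g hg
        exact hgne (rD_antisymm Φ hΦ r h2 h1)
      rw [hz, smul_zero]
    · intro h
      exact absurd hb.1 h
  · intro x hx
    rw [hΦmul] at hx
    obtain ⟨g, hg, hxg⟩ := Finset.mem_biUnion.mp (support_sum hx)
    have hxg' : x ∈ (Φ (NMf ξ dd f * NMf ξ dd g)).support := Finsupp.support_smul hxg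
    have hle := (NMf_mul_NMf hξ hd hrel Φ hΦ f g).2 _ hxg'
    constructor
    · refine rD_trans r (rD_mono hr hle) ?_
      rw [add_comm f g, add_comm f eb]
      exact rD_add_right hr f (hb.2 g hg)
    · refine rD_trans r' (rD_mono hr' hle) ?_
      rw [add_comm f g, add_comm f eb]
      exact rD_add_right hr' f (hb'.2 g hg)

theorem reduction (hξ : ∀ i j, ξ i * ξ j = ξ j * ξ i)
    (hd : ∀ i j, dd i * dd j = dd j * dd i)
    (hrel : ∀ i j, dd i * ξ j - ξ j * dd i = if i = j then (1 : W) else 0)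
    (Φ : W ≃ₗ[K] MvPolynomial (Fin n ⊕ Fin n) K)
    (hΦ : ∀ lam mu, Φ (nm ξ dd lam mu) = MvPolynomial.monomial (expof lam mu) 1)
    {r r' : TO ↥(NormalMonomials ξ dd)}
    (hr : IsNormalOrdering ξ dd r) (hr' : IsNormalOrdering ξ dd r')
    (L : Submodule W W) (NS : ((Fin n ⊕ Fin n) →₀ ℕ) → Prop)
    (hpick : ∀ e, NS e → ∃ b eb, b ∈ L ∧ IsLTerm ξ dd Φ r b eb ∧
      IsLTerm ξ dd Φ r' b eb ∧ eb ≤ e) :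
    ∀ e₀ w, (∀ e ∈ (Φ w).support, NS e → rD ξ dd r e e₀) →
      ∃ (u : W) (T : Finset ((Fin n ⊕ Fin n) →₀ ℕ)), u ∈ L ∧
        (∀ e ∈ (Φ (w - u)).support, ¬ NS e) ∧
        (∀ t ∈ T, rD ξ dd r t e₀ ∧ NS t) ∧
        (∀ e ∈ (Φ u).support, ∃ t ∈ T, rD ξ dd r' e t) ∧
        (∀ t ∈ T, (∀ t' ∈ T, rD ξ dd r' t' t) → coeff t (Φ u) ≠ 0) := by
  classical
  intro e₀
  refine WellFounded.induction (rD_strict_wf Φ hΦ hr) e₀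
    (C := fun e₀ => ∀ w, (∀ e ∈ (Φ w).support, NS e → rD ξ dd r e e₀) →
      ∃ (u : W) (T : Finset ((Fin n ⊕ Fin n) →₀ ℕ)), u ∈ L ∧
        (∀ e ∈ (Φ (w - u)).support, ¬ NS e) ∧
        (∀ t ∈ T, rD ξ dd r t e₀ ∧ NS t) ∧
        (∀ e ∈ (Φ u).support, ∃ t ∈ T, rD ξ dd r' e t) ∧
        (∀ t ∈ T, (∀ t' ∈ T, rD ξ dd r' t' t) → coeff t (Φ u) ≠ 0)) ?_
  intro e₀' IH w hw
  by_cases hNSempty : ((Φ w).support.filter NS) = ∅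
  · refine ⟨0, ∅, L.zero_mem, ?_, by simp, by simp, by simp⟩
    intro e he hNSe
    rw [sub_zero] at he
    have hmem := Finset.mem_filter.mpr ⟨he, hNSe⟩
    rw [hNSempty] at hmem
    exact absurd hmem (Finset.notMem_empty e)
  · have hne : ((Φ w).support.filter NS).Nonempty := Finset.nonempty_iff_ne_empty.mpr hNSempty
    obtain ⟨e₁, he₁mem, he₁max⟩ := exists_rD_greatest r _ hne
    have he₁supp : e₁ ∈ (Φ w).support := (Finset.mem_filter.mp he₁mem).1
    have he₁NS : NS e₁ := (Finset.mem_filter.mp he₁mem).2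
    obtain ⟨b, eb, hbL, hblt, hblt', heble⟩ := hpick e₁ he₁NS
    have hfeb : (e₁ - eb) + eb = e₁ := tsub_add_cancel_of_le heble
    obtain ⟨hcoefftop, hsupptop⟩ := NMf_mul_lt hξ hd hrel Φ hΦ hr hr' hblt hblt' (e₁ - eb)
    rw [hfeb] at hcoefftop hsupptop
    have hcb : coeff eb (Φ b) ≠ 0 := mem_support_iff.mp hblt.1
    set c : K := coeff e₁ (Φ w) / coeff eb (Φ b) with hc
    have hcne : c ≠ 0 := div_ne_zero (mem_support_iff.mp he₁supp) hcb
    set mb := NMf ξ dd (e₁ - eb) * b with hmb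
    have hmbL : mb ∈ L := by
      rw [hmb, ← smul_eq_mul]
      exact L.smul_mem _ hbL
    have hcmbL : c • mb ∈ L := by
      rw [Algebra.smul_def, ← smul_eq_mul]
      exact L.smul_mem _ hmbL
    set w' := w - c • mb with hw'
    have hΦw' : Φ w' = Φ w - c • Φ mb := by rw [hw', map_sub, map_smul]
    have hcoeffe₁ : coeff e₁ (Φ w') = 0 := by
      rw [hΦw', coeff_sub, coeff_smul, hcoefftop, hc, smul_eq_mul,
        div_mul_cancel₀ _ hcb, sub_self]
    have hsuppw' : ∀ e ∈ (Φ w').support, e ∈ (Φ w).support ∨ e ∈ (Φ mb).support := by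
      intro e he
      by_contra hcon
      push_neg at hcon
      have h1 : coeff e (Φ w) = 0 := notMem_support_iff.mp hcon.1
      have h2 : coeff e (Φ mb) = 0 := notMem_support_iff.mp hcon.2
      have h3 : coeff e (Φ w') = 0 := by
        rw [hΦw', coeff_sub, coeff_smul, h1, h2, smul_zero, sub_zero]
      exact mem_support_iff.mp he h3
    have hNSbound : ∀ e ∈ (Φ w').support, NS e → (rD ξ dd r e e₁ ∧ e ≠ e₁) := by
      intro e he hNSe
      constructor
      · rcases hsuppw' e he with h | h
        · exact he₁max e (Finset.mem_filter.mpr ⟨h, hNSe⟩)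
        · exact (hsupptop e h).1
      · intro hcontra
        subst hcontra
        exact mem_support_iff.mp he hcoeffe₁
    have hsuppcmb : ∀ e ∈ (Φ (c • mb)).support, rD ξ dd r' e e₁ := by
      intro e he
      have h1 : e ∈ (Φ mb).support := by
        rw [map_smul] at he
        exact Finsupp.support_smul he
      exact (hsupptop e h1).2
    have hsuppcmbr : ∀ e ∈ (Φ (c • mb)).support, rD ξ dd r e e₁ := by
      intro e he
      have h1 : e ∈ (Φ mb).support := by
        rw [map_smul] at he
        exact Finsupp.support_smul he
      exact (hsupptop e h1).1
    have hcoeffcmb : coeff e₁ (Φ (c • mb)) ≠ 0 := by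
      rw [map_smul, coeff_smul, hcoefftop, smul_eq_mul, hc, div_mul_cancel₀ _ hcb]
      exact mem_support_iff.mp he₁supp
    by_cases hNS'empty : ((Φ w').support.filter NS) = ∅
    · refine ⟨c • mb, {e₁}, hcmbL, ?_, ?_, ?_, ?_⟩
      · rw [← hw']
        intro e he hNSe
        have hmem := Finset.mem_filter.mpr ⟨he, hNSe⟩
        rw [hNS'empty] at hmem
        exact absurd hmem (Finset.notMem_empty e)
      · intro t ht
        rw [Finset.mem_singleton] at ht
        subst ht
        exact ⟨hw t he₁supp he₁NS, he₁NS⟩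
      · intro e he
        exact ⟨e₁, Finset.mem_singleton_self _, hsuppcmb e he⟩
      · intro t ht _
        rw [Finset.mem_singleton] at ht
        subst ht
        exact hcoeffcmb
    · have hne' : ((Φ w').support.filter NS).Nonempty := Finset.nonempty_iff_ne_empty.mpr hNS'empty
      obtain ⟨e₂, he₂mem, he₂max⟩ := exists_rD_greatest r _ hne'
      have he₂supp : e₂ ∈ (Φ w').support := (Finset.mem_filter.mp he₂mem).1
      have he₂NS : NS e₂ := (Finset.mem_filter.mp he₂mem).2
      have he₂lt : rD ξ dd r e₂ e₁ ∧ e₂ ≠ e₁ := hNSbound e₂ he₂supp he₂NS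
      have he₂lt' : rD ξ dd r e₂ e₀' ∧ e₂ ≠ e₀' := by
        have hb1 : rD ξ dd r e₁ e₀' := hw e₁ he₁supp he₁NS
        refine ⟨rD_trans r he₂lt.1 hb1, fun hcontra => ?_⟩
        subst hcontra
        exact he₂lt.2 (rD_antisymm Φ hΦ r he₂lt.1 hb1)
      obtain ⟨u', T', hu'L, hv', hT'bound, hu'supp, hu'coeff⟩ := IH e₂ he₂lt' w'
        (fun e he hNSe => he₂max e (Finset.mem_filter.mpr ⟨he, hNSe⟩))
      have hT'lt : ∀ t ∈ T', rD ξ dd r t e₂ := fun t ht => (hT'bound t ht).1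
      have hT'ne : ∀ t ∈ T', t ≠ e₁ := by
        intro t ht hcontra
        subst hcontra
        exact he₂lt.2 (rD_antisymm Φ hΦ r he₂lt.1 (hT'lt _ ht))
      refine ⟨c • mb + u', insert e₁ T', L.add_mem hcmbL hu'L, ?_, ?_, ?_, ?_⟩
      · have heq : w - (c • mb + u') = w' - u' := by
          rw [hw']
          rw [sub_sub]
        rw [heq]
        exact hv'
      · intro t ht
        rcases Finset.mem_insert.mp ht with rfl | ht'
        · exact ⟨hw t he₁supp he₁NS, he₁NS⟩
        · obtain ⟨h1, h2⟩ := hT'bound t ht'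
          exact ⟨rD_trans r (rD_trans r h1 he₂lt.1) (hw e₁ he₁supp he₁NS), h2⟩
      · intro e he
        rw [map_add] at he
        rcases Finset.mem_union.mp (Finsupp.support_add he) with h | h
        · exact ⟨e₁, Finset.mem_insert_self _ _, hsuppcmb e h⟩
        · obtain ⟨t, htT, hrd⟩ := hu'supp e h
          exact ⟨t, Finset.mem_insert_of_mem htT, hrd⟩
      · intro t ht hmax
        have hcoefft : coeff t (Φ (c • mb + u')) = coeff t (Φ (c • mb)) + coeff t (Φ u') := by
          rw [map_add, coeff_add]
        rcases Finset.mem_insert.mp ht with rfl | ht'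
        · have hz : coeff t (Φ u') = 0 := by
            rw [← notMem_support_iff]
            intro hmem
            obtain ⟨t'', ht''T, hrd⟩ := hu'supp t hmem
            have h1 : rD ξ dd r' t'' t := hmax t'' (Finset.mem_insert_of_mem ht''T)
            have h2 : t'' = t := rD_antisymm Φ hΦ r' h1 hrd
            exact hT'ne t'' ht''T h2
          rw [hcoefft, hz, add_zero]
          exact hcoeffcmb
        · have h1 : coeff t (Φ (c • mb)) = 0 := by
            rw [← notMem_support_iff]
            intro hmem
            have h2 : rD ξ dd r' t e₁ := hsuppcmb t hmem
            have h3 : rD ξ dd r' e₁ t := hmax e₁ (Finset.mem_insert_self _ _)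
            exact hT'ne t ht' (rD_antisymm Φ hΦ r' h2 h3)
          have h4 : coeff t (Φ u') ≠ 0 :=
            hu'coeff t ht' (fun t' ht'' => hmax t' (Finset.mem_insert_of_mem ht''))
          rw [hcoefft, h1, zero_add]
          exact h4

end WeylAux3
/-- if `B` is a Gröbner basis of the left ideal `L` with respect to the normal
ordering `≼`, and `≼'` is a normal ordering agreeing with `≼` on `Supp(B)`, then `B` is a
Gröbner basis of `L` with respect to `≼'` as well. -/
theorem groebnerBasis_of_restriction_eq
    {K : Type*} [Field K] [CharZero K] {n : ℕ} (hn : 1 ≤ n)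
    {W : Type*} [Ring W] [Algebra K W] (ξ dd : Fin n → W)
    (hξcomm : ∀ i j, ξ i * ξ j = ξ j * ξ i)
    (hddcomm : ∀ i j, dd i * dd j = dd j * dd i)
    (hrel : ∀ i j, dd i * ξ j - ξ j * dd i = if i = j then (1 : W) else 0)
    (Φ : W ≃ₗ[K] MvPolynomial (Fin n ⊕ Fin n) K)
    (hΦ : ∀ lam mu, Φ (nm ξ dd lam mu) = MvPolynomial.monomial (expof lam mu) 1)
    (r r' : TO ↥(NormalMonomials ξ dd))
    (hr : IsNormalOrdering ξ dd r) (hr' : IsNormalOrdering ξ dd r')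
    (L : Submodule W W) (B : Finset W) (hB : IsGroebnerBasis ξ dd Φ r L B)
    (hagree : ∀ d e : (Fin n ⊕ Fin n) →₀ ℕ,
      d ∈ ⋃ b ∈ B, ((Φ b).support : Set ((Fin n ⊕ Fin n) →₀ ℕ)) →
      e ∈ ⋃ b ∈ B, ((Φ b).support : Set ((Fin n ⊕ Fin n) →₀ ℕ)) →
      (rD ξ dd r d e ↔ rD ξ dd r' d e)) :
    IsGroebnerBasis ξ dd Φ r' L B := by
  classical
  obtain ⟨hBsub, hBspan, hBlt⟩ := hB
  have hagree' : ∀ b ∈ B, ∀ e, IsLTerm ξ dd Φ r b e ↔ IsLTerm ξ dd Φ r' b e := by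
    intro b hb e
    have hsub : ∀ x ∈ (Φ b).support,
        x ∈ ⋃ b ∈ B, (((Φ b).support : Set ((Fin n ⊕ Fin n) →₀ ℕ))) := by
      intro x hx
      exact Set.mem_iUnion₂.mpr ⟨b, hb, hx⟩
    constructor
    · rintro ⟨h1, h2⟩
      exact ⟨h1, fun c hc => (hagree c e (hsub c hc) (hsub e h1)).mp (h2 c hc)⟩
    · rintro ⟨h1, h2⟩
      exact ⟨h1, fun c hc => (hagree c e (hsub c hc) (hsub e h1)).mpr (h2 c hc)⟩
  set Es : Set ((Fin n ⊕ Fin n) →₀ ℕ) := {e | ∃ b ∈ B, b ≠ 0 ∧ IsLTerm ξ dd Φ r b e} with hEs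
  have hgenB : {p : MvPolynomial (Fin n ⊕ Fin n) K |
        ∃ b ∈ B, b ≠ 0 ∧ ∃ d, IsLTerm ξ dd Φ r b d ∧ p = monomial d 1}
      = {p | ∃ e ∈ Es, p = monomial e 1} := by
    ext p
    constructor
    · rintro ⟨b, hb, hb0, d, hlt, rfl⟩
      exact ⟨d, ⟨b, hb, hb0, hlt⟩, rfl⟩
    · rintro ⟨e, ⟨b, hb, hb0, hlt⟩, rfl⟩
      exact ⟨b, hb, hb0, e, hlt, rfl⟩
  have hgenB' : {p : MvPolynomial (Fin n ⊕ Fin n) K |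
        ∃ b ∈ B, b ≠ 0 ∧ ∃ d, IsLTerm ξ dd Φ r' b d ∧ p = monomial d 1}
      = {p | ∃ e ∈ Es, p = monomial e 1} := by
    ext p
    constructor
    · rintro ⟨b, hb, hb0, d, hlt, rfl⟩
      exact ⟨d, ⟨b, hb, hb0, (hagree' b hb d).mpr hlt⟩, rfl⟩
    · rintro ⟨e, ⟨b, hb, hb0, hlt⟩, rfl⟩
      exact ⟨b, hb, hb0, e, (hagree' b hb e).mp hlt, rfl⟩
  refine ⟨hBsub, hBspan, ?_⟩
  rw [hgenB']
  rw [hgenB] at hBlt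
  set NS : ((Fin n ⊕ Fin n) →₀ ℕ) → Prop := fun e => ∃ eb ∈ Es, eb ≤ e with hNS
  have hLNS : ∀ v : W, v ∈ L → v ≠ 0 → ∀ e, IsLTerm ξ dd Φ r v e → NS e := by
    intro v hv hv0 e hlt
    have hmem : monomial e (1:K) ∈
        Ideal.span {p | ∃ x ∈ (L : Set W), x ≠ 0 ∧
          ∃ d, IsLTerm ξ dd Φ r x d ∧ p = monomial d 1} :=
      Ideal.subset_span ⟨v, hv, hv0, e, hlt, rfl⟩
    have hmem2 : monomial e (1:K) ∈ LTIdeal ξ dd Φ r (L : Set W) := hmem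
    rw [hBlt] at hmem2
    exact monomial_mem_span_iff_div hmem2
  have hltex : ∀ v : W, v ≠ 0 → ∃ e, IsLTerm ξ dd Φ r v e := by
    intro v hv0
    have hsupp : (Φ v).support.Nonempty := by
      rw [Finset.nonempty_iff_ne_empty]
      intro h0
      exact hv0 (Φ.map_eq_zero_iff.mp (support_eq_empty.mp h0))
    obtain ⟨e, he, hemax⟩ := exists_rD_greatest r _ hsupp
    exact ⟨e, he, hemax⟩
  apply le_antisymm
  · rw [LTIdeal, Ideal.span_le]
    rintro p ⟨x, hxL, hx0, d, hlt', rfl⟩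
    have hsupp : (Φ x).support.Nonempty := ⟨d, hlt'.1⟩
    obtain ⟨e₀, he₀, he₀max⟩ := exists_rD_greatest r _ hsupp
    have hpick : ∀ e, NS e → ∃ b eb, b ∈ L ∧ IsLTerm ξ dd Φ r b eb ∧
        IsLTerm ξ dd Φ r' b eb ∧ eb ≤ e := by
      intro e he
      have he2 : ∃ eb ∈ Es, eb ≤ e := he
      obtain ⟨eb, hebEs, hle⟩ := he2
      have hebEs2 : ∃ b ∈ B, b ≠ 0 ∧ IsLTerm ξ dd Φ r b eb := hebEs
      obtain ⟨b, hbB, hb0, hltb⟩ := hebEs2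
      exact ⟨b, eb, hBsub hbB, hltb, (hagree' b hbB eb).mp hltb, hle⟩
    obtain ⟨u, T, huL, hvNS, hTbound, husupp, hucoeff⟩ :=
      reduction hξcomm hddcomm hrel Φ hΦ hr hr' L NS hpick e₀ x (fun e he _ => he₀max e he)
    have hxu : x = u := by
      by_contra hne
      have hv0 : x - u ≠ 0 := sub_ne_zero.mpr hne
      obtain ⟨e, hlte⟩ := hltex (x - u) hv0
      have hNSe : NS e := hLNS (x - u) (L.sub_mem hxL huL) hv0 e hlte
      exact hvNS e hlte.1 hNSe
    have hdsupp : d ∈ (Φ u).support := by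
      have := hlt'.1
      rwa [hxu] at this
    obtain ⟨t0, ht0, _⟩ := husupp d hdsupp
    obtain ⟨M, hM, hMmax⟩ := exists_rD_greatest r' T ⟨t0, ht0⟩
    have hMco : coeff M (Φ u) ≠ 0 := hucoeff M hM (fun t' ht' => hMmax t' ht')
    have hMsupp : M ∈ (Φ x).support := by
      rw [hxu]
      exact mem_support_iff.mpr hMco
    have h1 : rD ξ dd r' M d := hlt'.2 M hMsupp
    have h2 : rD ξ dd r' d M := by
      obtain ⟨t, htT, hdt⟩ := husupp d hdsupp
      exact rD_trans r' hdt (hMmax t htT)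
    have hdM : d = M := rD_antisymm Φ hΦ r' h2 h1
    have hNSd : NS d := by
      rw [hdM]
      exact (hTbound M hM).2
    have hNSd2 : ∃ eb ∈ Es, eb ≤ d := hNSd
    obtain ⟨eb, hebEs, heble⟩ := hNSd2
    exact monomial_mem_span_of_div hebEs heble
  · rw [Ideal.span_le]
    rintro p ⟨e, he, rfl⟩
    have he2 : ∃ b ∈ B, b ≠ 0 ∧ IsLTerm ξ dd Φ r b e := he
    obtain ⟨b, hbB, hb0, hlt⟩ := he2
    exact Ideal.subset_span ⟨b, hBsub hbB, hb0, e, (hagree' b hbB e).mp hlt, rfl⟩
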